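/- For every real t with 0 ≤ t < 4, the series ∑_{p≥0} (p!)²/(2p)! · t^p converges and its sum equals (1/(1−t/4)) · (1 + (1/2)·√(t/(1−t/4))·arcsin(√t/2)). -/

import Mathlib

open intervalIntegral Real MeasureTheory

lemma beta_nat (m n : ℕ) :
    ∫ x in (0:ℝ)..1, x ^ m * (1 - x) ^ n
      = (m.factorial * n.factorial : ℝ) / (m + n + 1).factorial := by
  induction n generalizing m with
  | zero =>
    rw [show (fun x:ℝ => x ^ m * (1 - x) ^ 0) = fun x:ℝ => x ^ m by funext x; simp]
    rw [integral_pow]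
    rw [Nat.factorial_succ]
    rw [eq_div_iff (by positivity)]
    push_cast
    field_simp
    simp
  | succ n ih =>
    have key : ∀ x : ℝ, HasDerivAt (fun x : ℝ => x ^ (m+1) * (1 - x) ^ (n+1))
        ((m+1 : ℝ) * x ^ m * (1 - x) ^ (n+1) - (n+1 : ℝ) * (x ^ (m+1) * (1 - x) ^ n)) x := by
      intro x
      have h1 : HasDerivAt (fun x : ℝ => x ^ (m+1)) ((m+1 : ℝ) * x ^ m) x := by
        simpa using hasDerivAt_pow (m+1) x
      have h2 : HasDerivAt (fun x : ℝ => (1 - x) ^ (n+1))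
          (-((n+1 : ℝ) * (1 - x) ^ n)) x := by
        have hb : HasDerivAt (fun x : ℝ => 1 - x) (-1) x := by
          simpa using (hasDerivAt_id x).const_sub 1
        have := (hasDerivAt_pow (n+1) (1 - x)).comp x hb
        refine this.congr_deriv ?_
        simp only [Nat.add_sub_cancel]; push_cast; ring
      have := h1.mul h2
      refine this.congr_deriv ?_
      ring
    have hzero : ∫ x in (0:ℝ)..1,
        ((m+1 : ℝ) * x ^ m * (1 - x) ^ (n+1) - (n+1 : ℝ) * (x ^ (m+1) * (1 - x) ^ n)) = 0 := by
      rw [integral_eq_sub_of_hasDerivAt (fun x _ => key x)]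
      · norm_num
      · apply Continuous.intervalIntegrable
        continuity
    have hsplit : ∫ x in (0:ℝ)..1,
        ((m+1 : ℝ) * x ^ m * (1 - x) ^ (n+1) - (n+1 : ℝ) * (x ^ (m+1) * (1 - x) ^ n))
        = (m+1 : ℝ) * (∫ x in (0:ℝ)..1, x ^ m * (1 - x) ^ (n+1))
          - (n+1 : ℝ) * ∫ x in (0:ℝ)..1, x ^ (m+1) * (1 - x) ^ n := by
      rw [intervalIntegral.integral_sub (by apply Continuous.intervalIntegrable; continuity)
        (by apply Continuous.intervalIntegrable; continuity),
        intervalIntegral.integral_const_mul]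
      congr 1
      rw [← intervalIntegral.integral_const_mul]
      apply intervalIntegral.integral_congr
      intro x _
      ring
    have heq : (m+1 : ℝ) * (∫ x in (0:ℝ)..1, x ^ m * (1 - x) ^ (n+1))
        = (n+1 : ℝ) * ∫ x in (0:ℝ)..1, x ^ (m+1) * (1 - x) ^ n := by
      have := hsplit ▸ hzero
      linarith
    have h2 := ih (m+1)
    have hm1 : (0:ℝ) < m + 1 := by positivity
    have : (∫ x in (0:ℝ)..1, x ^ m * (1 - x) ^ (n+1))
        = (n+1 : ℝ) / (m+1 : ℝ) * ((m+1).factorial * n.factorial / ((m+1) + n + 1).factorial) := by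
      rw [← h2]
      field_simp at heq ⊢
      linarith
    rw [this]
    rw [Nat.factorial_succ (m), Nat.factorial_succ n]
    have harr : (m + 1 + n + 1) = (m + (n+1) + 1) := by omega
    rw [harr]
    push_cast
    have hfac : ((m + (n+1) + 1).factorial : ℝ) > 0 := by positivity
    field_simp

lemma sum_eq_integral (t : ℝ) (ht0 : 0 ≤ t) (ht4 : t < 4) :
    HasSum (fun p : ℕ => (p.factorial : ℝ) ^ 2 / ((2 * p).factorial : ℝ) * t ^ p)
      (∫ x in Set.Ioc (0:ℝ) 1, (1 + t*x*(1-x)) / (1 - t*x*(1-x))^2) := by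
  set F : ℕ → ℝ → ℝ := fun p x => (2*p+1 : ℝ) * (t*x*(1-x))^p with hF
  have hcont : ∀ p, Continuous (F p) := by
    intro p; continuity
  have hFint : ∀ p, IntegrableOn (F p) (Set.Ioc (0:ℝ) 1) := fun p =>
    (hcont p).integrableOn_Ioc
  -- value of each integral
  have hval : ∀ p : ℕ, ∫ x in Set.Ioc (0:ℝ) 1, F p x
      = (p.factorial : ℝ) ^ 2 / ((2 * p).factorial : ℝ) * t ^ p := by
    intro p
    rw [← intervalIntegral.integral_of_le (by norm_num : (0:ℝ) ≤ 1)]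
    have : ∀ x : ℝ, F p x = ((2*p+1 : ℝ) * t^p) * (x^p * (1-x)^p) := by
      intro x; simp only [hF]; rw [mul_pow, mul_pow]; ring
    rw [intervalIntegral.integral_congr (fun x _ => this x),
      intervalIntegral.integral_const_mul, beta_nat p p]
    have h1 : (p + p + 1) = 2*p + 1 := by ring
    rw [h1, Nat.factorial_succ]
    have h2 : ((2*p+1).factorial : ℝ) > 0 := by positivity
    have h3 : ((2*p).factorial : ℝ) > 0 := by positivity
    push_cast
    field_simp
  -- bounds on x(1-x)
  have hxb : ∀ x ∈ Set.Ioc (0:ℝ) 1, 0 ≤ t*x*(1-x) ∧ t*x*(1-x) ≤ t/4 := by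
    intro x hx
    obtain ⟨hx0, hx1⟩ := hx
    constructor
    · have : 0 ≤ x*(1-x) := mul_nonneg hx0.le (by linarith)
      nlinarith
    · nlinarith [sq_nonneg (x - 1/2)]
  -- summability of norms
  have hr : |t/4| < 1 := by rw [abs_of_nonneg (by linarith)]; linarith
  have hsum21 : Summable (fun p : ℕ => (2*p+1 : ℝ) * (t/4)^p) := by
    have h1 : Summable (fun p : ℕ => (p:ℝ) * (t/4)^p) := by
      have := summable_pow_mul_geometric_of_norm_lt_one 1 (by rwa [Real.norm_eq_abs])
        (R := ℝ) (r := t/4)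
      simpa using this
    have h2 : Summable (fun p : ℕ => (t/4)^p) := summable_geometric_of_abs_lt_one hr
    have := (h1.mul_left 2).add h2
    apply this.congr
    intro p; ring
  have hnorm : Summable fun p => ∫ x in Set.Ioc (0:ℝ) 1, ‖F p x‖ := by
    apply Summable.of_nonneg_of_le (fun p => integral_nonneg (fun x => norm_nonneg _))
      _ hsum21
    intro p
    have hle : ∀ x ∈ Set.Ioc (0:ℝ) 1, ‖F p x‖ ≤ (2*p+1 : ℝ) * (t/4)^p := by
      intro x hx
      obtain ⟨h0, h4⟩ := hxb x hx
      rw [hF, Real.norm_eq_abs, abs_of_nonneg (by positivity)]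
      have : (t*x*(1-x))^p ≤ (t/4)^p := pow_le_pow_left₀ h0 h4 p
      have h2p : (0:ℝ) ≤ 2*p+1 := by positivity
      nlinarith
    calc ∫ x in Set.Ioc (0:ℝ) 1, ‖F p x‖
        ≤ ∫ _x in Set.Ioc (0:ℝ) 1, (2*p+1 : ℝ) * (t/4)^p := by
          apply setIntegral_mono_on (hFint p).norm (integrableOn_const measure_Ioc_lt_top.ne)
            measurableSet_Ioc hle
      _ = (2*p+1 : ℝ) * (t/4)^p := by simp
  have hmain := MeasureTheory.hasSum_integral_of_summable_integral_norm
    (μ := volume.restrict (Set.Ioc (0:ℝ) 1)) hFint hnorm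
  -- identify the tsum pointwise on Ioc 0 1
  have htsum : ∀ x ∈ Set.Ioc (0:ℝ) 1, (∑' p, F p x) = (1 + t*x*(1-x)) / (1 - t*x*(1-x))^2 := by
    intro x hx
    obtain ⟨h0, h4⟩ := hxb x hx
    set u := t*x*(1-x) with hu
    have hu1 : u < 1 := by linarith
    have habs : ‖u‖ < 1 := by rw [Real.norm_eq_abs, abs_of_nonneg h0]; exact hu1
    have h1 : HasSum (fun p : ℕ => (p:ℝ) * u^p) (u / (1-u)^2) :=
      hasSum_coe_mul_geometric_of_norm_lt_one habs
    have h2 : HasSum (fun p : ℕ => u^p) (1/(1-u)) := by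
      simpa [one_div] using hasSum_geometric_of_norm_lt_one habs
    have h3 := (h1.mul_left 2).add h2
    have h4' : HasSum (fun p => F p x) (2 * (u/(1-u)^2) + 1/(1-u)) := by
      apply h3.congr_fun
      intro p; simp only [hF, ← hu]; ring
    rw [h4'.tsum_eq]
    have hne : (1:ℝ) - u ≠ 0 := by linarith
    field_simp
    ring
  have : (∫ x in Set.Ioc (0:ℝ) 1, ∑' p, F p x)
      = ∫ x in Set.Ioc (0:ℝ) 1, (1 + t*x*(1-x)) / (1 - t*x*(1-x))^2 :=
    setIntegral_congr_fun measurableSet_Ioc (fun x hx => htsum x hx)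
  rw [this] at hmain
  have hfin : (fun p => ∫ x in Set.Ioc (0:ℝ) 1, F p x)
      = fun p : ℕ => (p.factorial : ℝ) ^ 2 / ((2 * p).factorial : ℝ) * t ^ p :=
    funext hval
  rwa [hfin] at hmain

lemma integral_eval (t : ℝ) (ht0 : 0 < t) (ht4 : t < 4) :
    ∫ x in Set.Ioc (0:ℝ) 1, (1 + t*x*(1-x)) / (1 - t*x*(1-x))^2
      = 1 / (1 - t / 4) *
        (1 + 1 / 2 * Real.sqrt (t / (1 - t / 4)) * Real.arcsin (Real.sqrt t / 2)) := by
  set b : ℝ := 1 - t/4 with hbdef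
  have hb : 0 < b := by rw [hbdef]; linarith
  set r : ℝ := Real.sqrt (t/b) with hrdef
  have hr : 0 < r := Real.sqrt_pos.2 (by positivity)
  have hr2 : r^2 = t/b := Real.sq_sqrt (by positivity)
  have hrb : r^2 * b = t := by rw [hr2]; field_simp
  clear_value b r
  set F : ℝ → ℝ := fun x => (r/(4*b)) * Real.arctan ((x - 1/2)*r)
      + (1/b) * ((x - 1/2)/(b + t*(x - 1/2)^2)) with hFdef
  have hden : ∀ x : ℝ, 0 < b + t*(x - 1/2)^2 := by intro x; positivity
  have hderiv : ∀ x : ℝ, HasDerivAt F ((1 + t*x*(1-x)) / (1 - t*x*(1-x))^2) x := by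
    intro x
    have h1 : HasDerivAt (fun x : ℝ => (x - 1/2)*r) r x := by
      exact (((hasDerivAt_id x).sub_const (1/2)).mul_const r).congr_deriv (one_mul r)
    have h2 : HasDerivAt (fun x : ℝ => Real.arctan ((x - 1/2)*r))
        (1 / (1 + ((x - 1/2)*r)^2) * r) x :=
      h1.arctan
    have h3 : HasDerivAt (fun x : ℝ => b + t*(x - 1/2)^2) (t*(2*(x - 1/2))) x := by
      have := (((hasDerivAt_id x).sub_const (1/2)).pow 2).const_mul t
      simpa using this.const_add b
    have h4 : HasDerivAt (fun x : ℝ => (x - 1/2)/(b + t*(x - 1/2)^2))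
        ((1 * (b + t*(x - 1/2)^2) - (x - 1/2) * (t*(2*(x - 1/2)))) / (b + t*(x - 1/2)^2)^2) x :=
      ((hasDerivAt_id x).sub_const (1/2)).div h3 (hden x).ne'
    have h5 := (h2.const_mul (r/(4*b))).add (h4.const_mul (1/b))
    refine h5.congr_deriv ?_
    symm
    have hD := hden x
    have hDne : b + t*(x - 1/2)^2 ≠ 0 := hD.ne'
    have hne1 : 1 - t*x*(1-x) = b + t*(x-1/2)^2 := by rw [hbdef]; ring
    have key : 1 + ((x - 1/2)*r)^2 = (b + t*(x-1/2)^2)/b := by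
      rw [eq_div_iff hb.ne']
      linear_combination (x - 1/2)^2 * hrb
    have hfirst : r/(4*b) * (1/(1 + ((x - 1/2)*r)^2) * r)
        = t/(4*b*(b + t*(x-1/2)^2)) := by
      have hbne : b ≠ 0 := hb.ne'
      rw [key, one_div_div]
      rw [show b/(b + t*(x-1/2)^2)*r = b*r/(b + t*(x-1/2)^2) from div_mul_eq_mul_div _ _ _,
        div_mul_div_comm, div_eq_div_iff (by positivity) (by positivity)]
      linear_combination (4*b*(b + t*(x-1/2)^2)) * hrb
    rw [hne1, hfirst]
    have h6 : t/(4*b*(b + t*(x-1/2)^2))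
        + 1/b * ((1*(b + t*(x-1/2)^2) - (x-1/2)*(t*(2*(x-1/2))))/(b + t*(x-1/2)^2)^2)
        = (t*(b + t*(x-1/2)^2) + 4*((b + t*(x-1/2)^2) - 2*t*(x-1/2)^2))
          / (4*b*(b + t*(x-1/2)^2)^2) := by
      field_simp
    rw [h6, div_eq_div_iff (by positivity) (by positivity)]
    linear_combination (-4*t*(x-1/2)^2*(b + t*(x-1/2)^2)^2) * hbdef
  have hcont : Continuous (fun x : ℝ => (1 + t*x*(1-x)) / (1 - t*x*(1-x))^2) := by
    apply Continuous.div (by fun_prop) (by fun_prop)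
    intro x
    have hne1 : 1 - t*x*(1-x) = b + t*(x-1/2)^2 := by rw [hbdef]; ring
    rw [hne1]
    have := hden x
    positivity
  have hI : ∫ x in Set.Ioc (0:ℝ) 1, (1 + t*x*(1-x)) / (1 - t*x*(1-x))^2 = F 1 - F 0 := by
    rw [← intervalIntegral.integral_of_le (by norm_num : (0:ℝ) ≤ 1)]
    exact integral_eq_sub_of_hasDerivAt (fun x _ => hderiv x) (hcont.intervalIntegrable 0 1)
  rw [hI]
  have harc : Real.arctan (r/2) = Real.arcsin (Real.sqrt t / 2) := by
    rw [Real.arctan_eq_arcsin]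
    congr 1
    have h1 : 1 + (r/2)^2 = 1/b := by
      rw [eq_div_iff hb.ne']
      linear_combination (1/4) * hrb + hbdef
    rw [h1, one_div, Real.sqrt_inv, div_eq_mul_inv, inv_inv]
    have hrsb : r * Real.sqrt b = Real.sqrt t := by
      rw [hrdef, ← Real.sqrt_mul (by positivity), div_mul_cancel₀ _ hb.ne']
    rw [div_mul_eq_mul_div, hrsb]
  have hb14 : b + t * ((1:ℝ)/2)^2 = 1 := by rw [hbdef]; ring
  have hFv : F 1 - F 0 = (r/(2*b)) * Real.arcsin (Real.sqrt t / 2) + 1/b := by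
    simp only [hFdef]
    rw [show ((1:ℝ) - 1/2) = 1/2 by norm_num, show ((0:ℝ) - 1/2) = -(1/2) by norm_num]
    rw [show (-(1/2:ℝ))*r = -((1/2)*r) by ring, Real.arctan_neg]
    have hm : b + t * (-(1/2:ℝ))^2 = 1 := by rw [hbdef]; ring
    rw [hm, hb14]
    rw [show ((1/2:ℝ))*r = r/2 by ring, harc]
    field_simp
    ring
  rw [hFv]
  field_simp
  ring


/-- for `0 ≤ t < 4`,
`∑_{p≥0} (p!)²/(2p)! t^p = (1/(1-t/4)) (1 + (1/2) √(t/(1-t/4)) arcsin(√t/2))`. -/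
theorem stmt18 (t : ℝ) (ht0 : 0 ≤ t) (ht4 : t < 4) :
    HasSum (fun p : ℕ => (p.factorial : ℝ) ^ 2 / ((2 * p).factorial : ℝ) * t ^ p)
      (1 / (1 - t / 4) *
        (1 + 1 / 2 * Real.sqrt (t / (1 - t / 4)) * Real.arcsin (Real.sqrt t / 2))) := by
  rcases eq_or_lt_of_le ht0 with h0 | h0
  · subst h0
    have hz : ∀ p : ℕ, p ≠ 0 →
        (p.factorial : ℝ) ^ 2 / ((2 * p).factorial : ℝ) * (0:ℝ) ^ p = 0 := by
      intro p hp; simp [zero_pow hp]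
    have hs := hasSum_single (f := fun p : ℕ =>
      (p.factorial : ℝ) ^ 2 / ((2 * p).factorial : ℝ) * (0:ℝ) ^ p) 0 hz
    simpa using hs
  · have h := sum_eq_integral t ht0 ht4
    rwa [integral_eval t h0 ht4] at h
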